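/- Let m_1, ..., m_N be non-negative integers and Q ≥ 1 a real number. Define the cyclic distance |j-k|_* = min{|j-k|, |j-k+N|, |j-k-N|}. Then there exists a subset J' ⊆ {1,...,N} such that |j-k|_* ≥ Q(√(m_j) + √(m_k)) for all distinct j, k ∈ J', and ∑_{j=1}^N m_j ≤ 5Q ∑_{j∈J'} m_j^{3/2}. -/

import Mathlib

open Finset Real

private def cdist (N : ℕ) (j k : Fin N) : ℤ :=
  min (|(j : ℤ) - (k : ℤ)|) (min (|(j : ℤ) - (k : ℤ) + N|) (|(j : ℤ) - (k : ℤ) - N|))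

private lemma cdist_symm (N : ℕ) (j k : Fin N) : cdist N j k = cdist N k j := by
  unfold cdist
  have h1 : |(j : ℤ) - (k : ℤ)| = |(k : ℤ) - (j : ℤ)| := abs_sub_comm _ _
  have h2 : |(j : ℤ) - (k : ℤ) + N| = |(k : ℤ) - (j : ℤ) - N| := by
    rw [← abs_neg]; ring_nf
  have h3 : |(j : ℤ) - (k : ℤ) - N| = |(k : ℤ) - (j : ℤ) + N| := by
    rw [← abs_neg]; ring_nf
  rw [h1, h2, h3, min_comm (|(k : ℤ) - (j : ℤ) + N|)]

private lemma cdist_self (N : ℕ) (j : Fin N) : cdist N j j = 0 := by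
  unfold cdist
  simp only [sub_self, abs_zero, zero_add, zero_sub, abs_neg]
  rw [abs_of_nonneg (Int.natCast_nonneg N)]
  omega

private lemma exists_rep (N : ℕ) (d : ℤ) :
    ∃ e : ℤ, (N : ℤ) ∣ (e - d) ∧ |e| ≤ min (|d|) (min (|d + N|) (|d - N|)) := by
  rcases le_or_gt (|d|) (min (|d + N|) (|d - N|)) with h | h
  · exact ⟨d, ⟨0, by ring⟩, le_min le_rfl h⟩
  · rcases le_total (|d + N|) (|d - N|) with h2 | h2
    · refine ⟨d + N, ⟨1, by ring⟩, le_min ?_ (le_min le_rfl h2)⟩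
      rw [min_eq_left h2] at h
      linarith
    · refine ⟨d - N, ⟨-1, by ring⟩, le_min ?_ (le_min h2 le_rfl)⟩
      rw [min_eq_right h2] at h
      linarith

private noncomputable def rep (N : ℕ) (d : ℤ) : ℤ := Classical.choose (exists_rep N d)

private lemma rep_dvd (N : ℕ) (d : ℤ) : (N : ℤ) ∣ (rep N d - d) :=
  (Classical.choose_spec (exists_rep N d)).1

private lemma rep_abs (N : ℕ) (d : ℤ) :
    |rep N d| ≤ min (|d|) (min (|d + N|) (|d - N|)) :=
  (Classical.choose_spec (exists_rep N d)).2

private lemma main_lemma (N : ℕ) (m : Fin N → ℕ) (Q : ℝ) (hQ : 1 ≤ Q) :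
    ∀ n (S : Finset (Fin N)), S.card ≤ n → ∃ J' ⊆ S,
      (∀ j ∈ J', ∀ k ∈ J', j ≠ k →
        Q * (Real.sqrt (m j) + Real.sqrt (m k)) ≤ ((cdist N j k : ℤ) : ℝ)) ∧
      (∑ j ∈ S, (m j : ℝ)) ≤ 5 * Q * ∑ j ∈ J', (m j : ℝ) * Real.sqrt (m j) := by
  intro n
  induction n with
  | zero =>
    intro S hS
    refine ⟨∅, empty_subset _, by simp, ?_⟩
    rw [Finset.card_eq_zero.mp (Nat.le_zero.mp hS)]
    simp
  | succ n ih =>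
    intro S hS
    by_cases hz : ∀ j ∈ S, m j = 0
    · refine ⟨∅, empty_subset _, by simp, ?_⟩
      have h0 : ∑ j ∈ S, (m j : ℝ) = 0 :=
        Finset.sum_eq_zero (fun j hj => by simp [hz j hj])
      simp [h0]
    · push_neg at hz
      obtain ⟨j0, hj0S, hj0⟩ := hz
      obtain ⟨j1, hj1S, hj1max⟩ := Finset.exists_max_image S m ⟨j0, hj0S⟩
      have hm1 : 1 ≤ m j1 := by have := hj1max j0 hj0S; omega
      have hsq1 : (1 : ℝ) ≤ Real.sqrt (m j1) := Real.one_le_sqrt.mpr (by exact_mod_cast hm1)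
      set r : ℝ := 2 * Q * Real.sqrt (m j1) with hr
      have hr1 : 1 ≤ r := by nlinarith
      set B : Finset (Fin N) :=
        S.filter (fun j => ((cdist N j j1 : ℤ) : ℝ) < Q * (Real.sqrt (m j) + Real.sqrt (m j1)))
        with hB
      have hBS : B ⊆ S := Finset.filter_subset _ _
      have hj1B : j1 ∈ B := by
        rw [hB, Finset.mem_filter]
        refine ⟨hj1S, ?_⟩
        rw [cdist_self]
        push_cast
        nlinarith
      -- card bound for B
      have hcard : (B.card : ℝ) ≤ 2 * r + 1 := by
        set A : ℤ := ⌈r⌉ - 1 with hA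
        have hA0 : 0 ≤ A := by
          have : (0 : ℤ) < ⌈r⌉ := Int.lt_ceil.mpr (by push_cast; linarith)
          omega
        have key : B.card ≤ (Finset.Icc (-A) A).card := by
          refine Finset.card_le_card_of_injOn
            (fun j => rep N ((j : ℤ) - (j1 : ℤ))) ?_ ?_
          · intro j hj
            have habs := rep_abs N ((j : ℤ) - (j1 : ℤ))
            simp only [Finset.mem_coe, hB, Finset.mem_filter] at hj
            have hlt : ((cdist N j j1 : ℤ) : ℝ) < r := by
              have hmj : m j ≤ m j1 := hj1max j hj.1
              have hsle : Real.sqrt (m j) ≤ Real.sqrt (m j1) :=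
                Real.sqrt_le_sqrt (by exact_mod_cast hmj)
              have h2 := hj.2
              nlinarith
            have hlt2 : ((|rep N ((j : ℤ) - (j1 : ℤ))| : ℤ) : ℝ) < r := by
              have h3 : |rep N ((j : ℤ) - (j1 : ℤ))| ≤ cdist N j j1 := habs
              calc ((|rep N ((j : ℤ) - (j1 : ℤ))| : ℤ) : ℝ)
                  ≤ ((cdist N j j1 : ℤ) : ℝ) := by exact_mod_cast h3
                _ < r := hlt
            have hceil : |rep N ((j : ℤ) - (j1 : ℤ))| < ⌈r⌉ := Int.lt_ceil.mpr hlt2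
            rw [Finset.mem_coe, Finset.mem_Icc]
            exact abs_le.mp (show |rep N ((j : ℤ) - (j1 : ℤ))| ≤ A by omega)
          · intro j hj k hk heq
            have hdj := rep_dvd N ((j : ℤ) - (j1 : ℤ))
            have hdk := rep_dvd N ((k : ℤ) - (j1 : ℤ))
            simp only at heq
            have hdvd : (N : ℤ) ∣ ((k : ℤ) - (j : ℤ)) := by
              have hsub := dvd_sub hdj hdk
              rw [heq] at hsub
              have h2 : (rep N ((k : ℤ) - (j1 : ℤ)) - ((j : ℤ) - (j1 : ℤ))) -
                  (rep N ((k : ℤ) - (j1 : ℤ)) - ((k : ℤ) - (j1 : ℤ)))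
                  = (k : ℤ) - (j : ℤ) := by ring
              rwa [h2] at hsub
            have hzero : (k : ℤ) - (j : ℤ) = 0 := by
              apply Int.eq_zero_of_abs_lt_dvd hdvd
              have hj' := j.isLt
              have hk' := k.isLt
              rw [abs_lt]
              omega
            have : (j : ℤ) = (k : ℤ) := by omega
            exact Fin.ext (by exact_mod_cast this)
        have hIcc : ((Finset.Icc (-A) A).card : ℝ) ≤ 2 * r + 1 := by
          rw [Int.card_Icc]
          have hceil : ((⌈r⌉ : ℤ) : ℝ) < r + 1 := Int.ceil_lt_add_one r
          have h5 : A + 1 - -A = 2 * A + 1 := by ring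
          have h6 : (((A + 1 - -A).toNat : ℤ) : ℝ) = 2 * (A : ℝ) + 1 := by
            rw [h5, Int.toNat_of_nonneg (by omega)]
            push_cast; ring
          have h7 : ((A + 1 - -A).toNat : ℝ) = (((A + 1 - -A).toNat : ℤ) : ℝ) := by push_cast; ring
          rw [h7, h6]
          have h8 : ((A : ℤ) : ℝ) = ((⌈r⌉ : ℤ) : ℝ) - 1 := by rw [hA]; push_cast; ring
          rw [h8]
          linarith
        calc (B.card : ℝ) ≤ ((Finset.Icc (-A) A).card : ℝ) := by exact_mod_cast key
          _ ≤ 2 * r + 1 := hIcc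
      -- sum over B bound
      have hsumB : ∑ j ∈ B, (m j : ℝ) ≤ 5 * Q * ((m j1 : ℝ) * Real.sqrt (m j1)) := by
        have h1 : ∑ j ∈ B, (m j : ℝ) ≤ ∑ _j ∈ B, (m j1 : ℝ) := by
          apply Finset.sum_le_sum
          intro j hj
          exact_mod_cast hj1max j (hBS hj)
        rw [Finset.sum_const, nsmul_eq_mul] at h1
        have h3 : 2 * r + 1 ≤ 5 * Q * Real.sqrt (m j1) := by
          have : 1 ≤ Q * Real.sqrt (m j1) := by nlinarith
          rw [hr]; nlinarith
        have hm0 : (0 : ℝ) ≤ (m j1 : ℝ) := by positivity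
        nlinarith
      -- recurse
      obtain ⟨J'', hJ''sub, hsep'', hsum''⟩ := ih (S \ B) (by
        have h1 : (S \ B).card = S.card - B.card := Finset.card_sdiff_of_subset hBS
        have h2 : 1 ≤ B.card := Finset.card_pos.mpr ⟨j1, hj1B⟩
        have h3 : B.card ≤ S.card := Finset.card_le_card hBS
        omega)
      have hj1nJ'' : j1 ∉ J'' := fun h => (Finset.mem_sdiff.mp (hJ''sub h)).2 hj1B
      refine ⟨insert j1 J'', ?_, ?_, ?_⟩
      · intro x hx
        rcases Finset.mem_insert.mp hx with h | h
        · rwa [h]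
        · exact (Finset.mem_sdiff.mp (hJ''sub h)).1
      · intro j hj k hk hne
        have notB : ∀ x ∈ J'',
            Q * (Real.sqrt (m x) + Real.sqrt (m j1)) ≤ ((cdist N x j1 : ℤ) : ℝ) := by
          intro x hx
          have hxS := Finset.mem_sdiff.mp (hJ''sub hx)
          have hxB : x ∉ B := hxS.2
          rw [hB, Finset.mem_filter] at hxB
          push_neg at hxB
          exact hxB hxS.1
        rcases Finset.mem_insert.mp hj with hj' | hj' <;>
          rcases Finset.mem_insert.mp hk with hk' | hk'
        · exact absurd (hj'.trans hk'.symm) hne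
        · subst hj'
          rw [cdist_symm]
          linarith [notB k hk']
        · subst hk'
          linarith [notB j hj']
        · exact hsep'' j hj' k hk' hne
      · have hsplit : ∑ j ∈ S \ B, (m j : ℝ) + ∑ j ∈ B, (m j : ℝ) = ∑ j ∈ S, (m j : ℝ) :=
          Finset.sum_sdiff hBS
        rw [Finset.sum_insert hj1nJ'', mul_add]
        linarith

/-- Combinatorial lemma: cyclic separation with weight control. -/
theorem stmt_0 (N : ℕ) (hN : 0 < N) (m : Fin N → ℕ) (Q : ℝ) (hQ : 1 ≤ Q) :
    ∃ J' : Finset (Fin N),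
      (∀ j ∈ J', ∀ k ∈ J', j ≠ k →
        Q * (Real.sqrt (m j) + Real.sqrt (m k)) ≤
          ((min (|(j : ℤ) - (k : ℤ)|)
            (min (|(j : ℤ) - (k : ℤ) + N| ) (|(j : ℤ) - (k : ℤ) - N|)) : ℤ) : ℝ)) ∧
      (∑ j, (m j : ℝ)) ≤ 5 * Q * ∑ j ∈ J', (m j : ℝ) * Real.sqrt (m j) := by
  obtain ⟨J', _, hsep, hsum⟩ :=
    main_lemma N m Q hQ (Finset.univ.card) Finset.univ le_rfl
  exact ⟨J', fun j hj k hk hne => hsep j hj k hk hne, hsum⟩
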